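/- Write ℝⁿ = ℝ^k × ℝ^{n−k} with 1 ≤ k < n, and denote by e₁,…,e_n the standard basis of ℝⁿ. Let Y₁,…,Y_k be globally Lipschitz vector fields on ℝⁿ of the form Y_i(x) = e_i + Y_i^#(x), where Y_i^#(x) ∈ {0} × ℝ^{n−k} for every x, Y_i^#(0) = 0, and [Y_i,Y_j](x) = 0 for almost every x ∈ ℝⁿ and all 1 ≤ i,j ≤ k. Define G(t,z) := 𝓕^{t₁}_{Y₁} ∘ ⋯ ∘ 𝓕^{t_k}_{Y_k}(0,z) for t = (t₁,…,t_k) ∈ ℝ^k and z ∈ ℝ^{n−k}. Then there exist an open neighborhood U₀ of (0,0) in ℝ^k × ℝ^{n−k}, an open neighborhood U₁ of 0 in ℝⁿ, and a constant C ≥ 1 such that G maps U₀ bijectively onto U₁ and C^{−1}|p − q| ≤ |G(p) − G(q)| ≤ C|p − q| for all p, q ∈ U₀; in particular G : U₀ → U₁ is a Lipschitz homeomorphism with Lipschitz inverse. -/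

import Mathlib

open Set MeasureTheory

/-- Composition `𝓕¹ ∘ 𝓕² ∘ ⋯ ∘ 𝓕ᵏ` of a finite family of maps. -/
def flowComp {α : Type*} {k : ℕ} (F : Fin k → α → α) : α → α :=
  (List.ofFn F).foldr (· ∘ ·) id

section FlowAux
open Real
variable {E : Type*} [NormedAddCommGroup E] [NormedSpace ℝ E]
variable {L : NNReal} {Z : E → E}

lemma flow_ext (hZ : LipschitzWith L Z)
    {g h : ℝ → E} (hg : ∀ t, HasDerivAt g (Z (g t)) t)
    (hh : ∀ t, HasDerivAt h (Z (h t)) t) (hgh : g 0 = h 0) (t : ℝ) : g t = h t := by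
  have key := ODE_solution_unique_of_mem_Icc (v := fun _ => Z) (s := fun _ => (univ : Set E))
    (K := L) (t₀ := 0) (a := -(|t| + 1)) (b := |t| + 1) (f := g) (g := h)
    (fun _ _ => hZ.lipschitzOnWith)
    (by constructor <;> nlinarith [abs_nonneg t])
    (fun s _ => (hg s).continuousAt.continuousWithinAt)
    (fun s _ => hg s) (fun _ _ => trivial)
    (fun s _ => (hh s).continuousAt.continuousWithinAt)
    (fun s _ => hh s) (fun _ _ => trivial) hgh
  exact key ⟨by cases abs_cases t <;> linarith, by cases abs_cases t <;> linarith⟩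

variable {f : ℝ → E → E}

lemma flow_add (hZ : LipschitzWith L Z) (hf0 : ∀ x, f 0 x = x)
    (hf : ∀ t x, HasDerivAt (fun s => f s x) (Z (f t x)) t) (a b : ℝ) (x : E) :
    f (a + b) x = f a (f b x) := by
  have := flow_ext hZ (g := fun s => f (s + b) x) (h := fun s => f s (f b x))
    (fun t => (hf (t + b) x).comp_add_const t b)
    (fun t => hf t (f b x)) (by simp [hf0]) a
  simpa using this

lemma flow_cancel (hZ : LipschitzWith L Z) (hf0 : ∀ x, f 0 x = x)
    (hf : ∀ t x, HasDerivAt (fun s => f s x) (Z (f t x)) t) (t : ℝ) (x : E) :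
    f t (f (-t) x) = x := by
  have := flow_add hZ hf0 hf t (-t) x
  simpa [hf0] using this.symm

lemma flow_dist_fwd (hZ : LipschitzWith L Z) (hf0 : ∀ x, f 0 x = x)
    (hf : ∀ t x, HasDerivAt (fun s => f s x) (Z (f t x)) t) {t : ℝ} (ht : 0 ≤ t) (x y : E) :
    dist (f t x) (f t y) ≤ dist x y * exp (L * t) := by
  have := dist_le_of_trajectories_ODE (v := fun _ => Z) (K := L) (a := 0) (b := t)
    (f := fun s => f s x) (g := fun s => f s y) (δ := dist x y)
    (fun _ => hZ)
    (fun s _ => (hf s x).continuousAt.continuousWithinAt)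
    (fun s _ => (hf s x).hasDerivWithinAt)
    (fun s _ => (hf s y).continuousAt.continuousWithinAt)
    (fun s _ => (hf s y).hasDerivWithinAt)
    (by rw [hf0, hf0]) t ⟨ht, le_rfl⟩
  simpa using this

lemma gronwallBound_le_aux {K ε t : ℝ} (hK : 0 ≤ K) (hε : 0 ≤ ε) (ht : 0 ≤ t) :
    gronwallBound 0 K ε t ≤ ε * (t * exp (K * t)) := by
  rcases eq_or_ne K 0 with h | h
  · simp [h, gronwallBound_K0, mul_comm]
  · rw [gronwallBound_of_K_ne_0 h]
    have h1 : Real.exp (K * t) * Real.exp (-(K * t)) = 1 := by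
      rw [← Real.exp_add]; simp
    have h2 : -(K * t) + 1 ≤ Real.exp (-(K * t)) := Real.add_one_le_exp _
    have h3 : (0:ℝ) < Real.exp (K * t) := Real.exp_pos _
    have h4 : Real.exp (K * t) - 1 ≤ K * t * Real.exp (K * t) := by nlinarith
    have hK' : 0 < K := lt_of_le_of_ne hK (Ne.symm h)
    simp only [zero_mul, zero_add]
    rw [div_mul_eq_mul_div, div_le_iff₀ hK']
    calc ε * (Real.exp (K * t) - 1) ≤ ε * (K * t * Real.exp (K * t)) :=
          mul_le_mul_of_nonneg_left h4 hε
      _ = ε * (t * Real.exp (K * t)) * K := by ring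

lemma flow_dist_self_fwd (hZ : LipschitzWith L Z) (hf0 : ∀ x, f 0 x = x)
    (hf : ∀ t x, HasDerivAt (fun s => f s x) (Z (f t x)) t) {t : ℝ} (ht : 0 ≤ t) (x : E) :
    dist (f t x) x ≤ ‖Z x‖ * (t * exp (L * t)) := by
  have := dist_le_of_approx_trajectories_ODE (v := fun _ => Z) (K := L) (a := 0) (b := t)
    (f := fun s => f s x) (f' := fun s => Z (f s x)) (g := fun _ => x) (g' := fun _ => 0)
    (εf := 0) (εg := ‖Z x‖) (δ := 0)
    (fun _ => hZ)
    (fun s _ => (hf s x).continuousAt.continuousWithinAt)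
    (fun s _ => (hf s x).hasDerivWithinAt)
    (fun s _ => by simp)
    continuousOn_const
    (fun s _ => (hasDerivWithinAt_const _ _ _))
    (fun s _ => by simp [dist_eq_norm])
    (by simp [hf0])
    t ⟨ht, le_rfl⟩
  calc dist (f t x) x ≤ gronwallBound 0 L (0 + ‖Z x‖) (t - 0) := this
    _ ≤ ‖Z x‖ * (t * exp (L * t)) := by
        rw [zero_add, sub_zero]
        exact gronwallBound_le_aux L.coe_nonneg (norm_nonneg _) ht

omit [NormedSpace ℝ E] in
lemma lipschitz_neg' (hZ : LipschitzWith L Z) : LipschitzWith L (fun x => -Z x) :=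
  LipschitzWith.of_dist_le_mul (fun x y => by
    rw [dist_neg_neg]; exact hZ.dist_le_mul x y)

lemma flow_rev_deriv (hf : ∀ t x, HasDerivAt (fun s => f s x) (Z (f t x)) t) (t : ℝ) (x : E) :
    HasDerivAt (fun s => f (-s) x) (-Z (f (-t) x)) t := by
  have h1 : HasDerivAt (fun s : ℝ => -s) (-1 : ℝ) t := (hasDerivAt_id t).neg
  have := (hf (-t) x).scomp t h1
  simpa [Function.comp_def] using this

lemma flow_dist (hZ : LipschitzWith L Z) (hf0 : ∀ x, f 0 x = x)
    (hf : ∀ t x, HasDerivAt (fun s => f s x) (Z (f t x)) t) (t : ℝ) (x y : E) :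
    dist (f t x) (f t y) ≤ dist x y * exp (L * |t|) := by
  rcases le_or_gt 0 t with ht | ht
  · rw [abs_of_nonneg ht]; exact flow_dist_fwd hZ hf0 hf ht x y
  · have := flow_dist_fwd (f := fun s x => f (-s) x) (lipschitz_neg' hZ)
      (by simpa using hf0)
      (fun s x => flow_rev_deriv hf s x) (t := -t) (by linarith) x y
    rw [abs_of_neg ht]
    simpa using this

lemma flow_dist_self (hZ : LipschitzWith L Z) (hf0 : ∀ x, f 0 x = x)
    (hf : ∀ t x, HasDerivAt (fun s => f s x) (Z (f t x)) t) (t : ℝ) (x : E) :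
    dist (f t x) x ≤ ‖Z x‖ * (|t| * exp (L * |t|)) := by
  rcases le_or_gt 0 t with ht | ht
  · rw [abs_of_nonneg ht]; exact flow_dist_self_fwd hZ hf0 hf ht x
  · have := flow_dist_self_fwd (f := fun s x => f (-s) x) (lipschitz_neg' hZ)
      (by simpa using hf0)
      (fun s x => flow_rev_deriv hf s x) (t := -t) (by linarith) x
    rw [abs_of_neg ht]
    simpa using this

end FlowAux

section CompAux
variable {α : Type*} {k : ℕ}

lemma flowComp_zero (g : Fin 0 → α → α) : flowComp g = id := by
  simp [flowComp]

lemma flowComp_succ (g : Fin (k+1) → α → α) :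
    flowComp g = g 0 ∘ flowComp (fun i => g i.succ) := by
  simp [flowComp, List.ofFn_succ]

lemma flowComp_concat (g : Fin (k+1) → α → α) :
    flowComp g = flowComp (fun i => g i.castSucc) ∘ g (Fin.last k) := by
  induction k with
  | zero =>
    simp [flowComp, List.ofFn_succ]
  | succ k ih =>
    rw [flowComp_succ g, ih (fun i => g i.succ), flowComp_succ (fun i => g i.castSucc)]
    have h1 : (fun i : Fin k => g (i.succ.castSucc)) = fun i : Fin k => g (i.castSucc.succ) := by
      funext i; rw [Fin.succ_castSucc]
    have h2 : g ((0 : Fin (k+1)).castSucc) = g 0 := by norm_num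
    rw [Fin.succ_last]
    simp only [Function.comp_assoc]
    rw [h2, ← h1]

lemma flowComp_id_of (g : Fin k → α → α) (hg : ∀ i x, g i x = x) (x : α) :
    flowComp g x = x := by
  induction k with
  | zero => simp [flowComp_zero]
  | succ k ih =>
    rw [flowComp_succ]
    simp [hg, ih (fun i => g i.succ) (fun i x => hg _ x)]

lemma flowComp_leftInv (g h : Fin k → α → α) (hinv : ∀ i x, h i (g i x) = x) (x : α) :
    flowComp (fun j => h j.rev) (flowComp g x) = x := by
  induction k generalizing x with
  | zero => simp [flowComp_zero]
  | succ k ih =>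
    rw [flowComp_succ g, flowComp_concat (fun j => h j.rev)]
    have h1 : (fun i : Fin k => h (i.castSucc.rev)) = fun i : Fin k => h (i.rev.succ) := by
      funext i; rw [Fin.rev_castSucc]
    simp only [Function.comp_apply, Fin.rev_last, h1, hinv]
    exact ih (fun i => g i.succ) (fun i => h i.succ) (fun i x => hinv _ _) x

lemma flowComp_fst {β γ : Type*} [AddCommMonoid β] (g : Fin k → β × γ → β × γ) (v : Fin k → β)
    (hg : ∀ i x, (g i x).1 = x.1 + v i) (x : β × γ) :
    (flowComp g x).1 = x.1 + ∑ i, v i := by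
  induction k generalizing x with
  | zero => simp [flowComp_zero]
  | succ k ih =>
    rw [flowComp_succ]
    have := ih (fun i => g i.succ) (fun i => v i.succ) (fun i x => hg _ x) x
    simp only [Function.comp_apply, hg, this, Fin.sum_univ_succ]
    rw [add_assoc, add_comm (∑ i : Fin k, v i.succ) (v 0)]

variable [NormedAddCommGroup α]

lemma flowComp_lip (g : Fin k → α → α) {c : ℝ} (hc : 1 ≤ c)
    (hg : ∀ i x y, ‖g i x - g i y‖ ≤ c * ‖x - y‖) (x y : α) :
    ‖flowComp g x - flowComp g y‖ ≤ c ^ k * ‖x - y‖ := by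
  induction k generalizing x y with
  | zero => simp [flowComp_zero]
  | succ k ih =>
    rw [flowComp_succ]
    calc ‖g 0 (flowComp (fun i => g i.succ) x) - g 0 (flowComp (fun i => g i.succ) y)‖
        ≤ c * ‖flowComp (fun i => g i.succ) x - flowComp (fun i => g i.succ) y‖ := hg _ _ _
      _ ≤ c * (c ^ k * ‖x - y‖) := by
          have := ih (fun i => g i.succ) (fun i x y => hg _ x y) x y
          nlinarith [norm_nonneg (flowComp (fun i => g i.succ) x - flowComp (fun i => g i.succ) y),
            norm_nonneg (x - y)]
      _ = c ^ (k+1) * ‖x - y‖ := by ring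

lemma flowComp_norm_le (g : Fin k → α → α) {c : ℝ} (hc : 1 ≤ c)
    (hg : ∀ i x, ‖g i x‖ ≤ c * ‖x‖ + c) (x : α) :
    ‖flowComp g x‖ ≤ c ^ k * ‖x‖ + k * c ^ k := by
  induction k generalizing x with
  | zero => simp [flowComp_zero]
  | succ k ih =>
    rw [flowComp_succ]
    have hA := ih (fun i => g i.succ) (fun i x => hg _ x) x
    have hck : (1:ℝ) ≤ c ^ k := one_le_pow₀ hc
    calc ‖g 0 (flowComp (fun i => g i.succ) x)‖
        ≤ c * ‖flowComp (fun i => g i.succ) x‖ + c := hg _ _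
      _ ≤ c ^ (k+1) * ‖x‖ + (k+1) * c ^ (k+1) := by
          have h0 : (0:ℝ) ≤ ‖x‖ := norm_nonneg _
          have : c ^ (k+1) = c * c ^ k := by ring
          nlinarith [norm_nonneg (flowComp (fun i => g i.succ) x)]
      _ = _ := by push_cast; ring_nf

lemma flowComp_sub_le (g h : Fin k → α → α) {c d : ℝ} (hc : 1 ≤ c) (hd : 0 ≤ d)
    (hglip : ∀ i x y, ‖g i x - g i y‖ ≤ c * ‖x - y‖)
    (hh : ∀ i x, ‖h i x‖ ≤ c * ‖x‖ + c)
    (hcl : ∀ i x, ‖g i x - h i x‖ ≤ d * (1 + ‖x‖)) (x : α) :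
    ‖flowComp g x - flowComp h x‖ ≤ k * c ^ k * d * (1 + k + ‖x‖) := by
  induction k generalizing x with
  | zero => simp [flowComp_zero]
  | succ k ih =>
    rw [flowComp_succ g, flowComp_succ h]
    set A := flowComp (fun i => g i.succ) x with hA
    set B := flowComp (fun i => h i.succ) x with hB
    have hAB : ‖A - B‖ ≤ k * c ^ k * d * (1 + k + ‖x‖) :=
      ih (fun i => g i.succ) (fun i => h i.succ) (fun i x y => hglip _ x y)
        (fun i x => hh _ x) (fun i x => hcl _ x) x
    have hBn : ‖B‖ ≤ c ^ k * ‖x‖ + k * c ^ k :=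
      flowComp_norm_le (fun i => h i.succ) hc (fun i x => hh _ x) x
    have hck : (1:ℝ) ≤ c ^ k := one_le_pow₀ hc
    have key : ‖g 0 A - h 0 B‖ ≤ ‖g 0 A - g 0 B‖ + ‖g 0 B - h 0 B‖ :=
      norm_sub_le_norm_sub_add_norm_sub _ _ _
    have h1 : ‖g 0 A - g 0 B‖ ≤ c * ‖A - B‖ := hglip _ _ _
    have h2 : ‖g 0 B - h 0 B‖ ≤ d * (1 + ‖B‖) := hcl _ _
    have hcc : c ^ (k+1) = c * c ^ k := by ring
    have h0x : (0:ℝ) ≤ ‖x‖ := norm_nonneg _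
    have h0AB : (0:ℝ) ≤ ‖A - B‖ := norm_nonneg _
    have h0B : (0:ℝ) ≤ ‖B‖ := norm_nonneg _
    have hkn : (0:ℝ) ≤ (k:ℝ) := Nat.cast_nonneg k
    have hc0 : (0:ℝ) ≤ c := le_trans zero_le_one hc
    have hpow : c ^ k ≤ c ^ (k+1) := pow_le_pow_right₀ hc (Nat.le_succ k)
    have hck1 : (1:ℝ) ≤ c ^ (k+1) := one_le_pow₀ hc
    have e1 : c * ‖A - B‖ ≤ (k:ℝ) * c ^ (k+1) * d * (1 + k + ‖x‖) := by
      calc c * ‖A - B‖ ≤ c * ((k:ℝ) * c ^ k * d * (1 + k + ‖x‖)) :=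
            mul_le_mul_of_nonneg_left hAB hc0
        _ = (k:ℝ) * c ^ (k+1) * d * (1 + k + ‖x‖) := by ring
    have e2 : d * (1 + ‖B‖) ≤ c ^ (k+1) * d * (2 + k + ‖x‖) := by
      have e2a : d * (1 + ‖B‖) ≤ d * (1 + (c ^ k * ‖x‖ + k * c ^ k)) :=
        mul_le_mul_of_nonneg_left (by linarith) hd
      have e2b : 1 + (c ^ k * ‖x‖ + (k:ℝ) * c ^ k) ≤ c ^ (k+1) * (2 + k + ‖x‖) := by
        nlinarith [mul_nonneg hkn (sub_nonneg.2 hpow), mul_nonneg h0x (sub_nonneg.2 hpow)]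
      calc d * (1 + ‖B‖) ≤ d * (1 + (c ^ k * ‖x‖ + k * c ^ k)) := e2a
        _ ≤ d * (c ^ (k+1) * (2 + k + ‖x‖)) := mul_le_mul_of_nonneg_left e2b hd
        _ = c ^ (k+1) * d * (2 + k + ‖x‖) := by ring
    have hterm : (0:ℝ) ≤ (k:ℝ) * c ^ (k+1) * d :=
      mul_nonneg (mul_nonneg hkn (pow_nonneg hc0 _)) hd
    calc ‖g 0 A - h 0 B‖ ≤ c * ‖A - B‖ + d * (1 + ‖B‖) := by linarith
      _ ≤ (k:ℝ) * c ^ (k+1) * d * (1 + k + ‖x‖) + c ^ (k+1) * d * (2 + k + ‖x‖) := by linarith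
      _ ≤ ((k:ℕ)+1 : ℝ) * c ^ (k+1) * d * (1 + ((k:ℕ)+1 : ℝ) + ‖x‖) := by nlinarith
      _ = (((k+1 : ℕ)):ℝ) * c ^ (k+1) * d * (1 + ((k+1:ℕ):ℝ) + ‖x‖) := by push_cast; ring

end CompAux

set_option maxHeartbeats 1000000 in
/-- **Proposition 2.3.** Write `ℝⁿ = ℝ^k × ℝ^{n−k}` (with `m = n − k ≥ 1`).  Let
`Y₁,…,Y_k` be globally Lipschitz vector fields of the form `Y_i = e_i + Y_i^#`, where
`Y_i^#(x) ∈ {0} × ℝ^{n−k}`, `Y_i^#(0) = 0`, and `[Y_i,Y_j] = 0` a.e.  Let `𝓕^t_{Y_i}` be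
the flow of `Y_i` and `G(t,z) = 𝓕^{t₁}_{Y₁} ∘ ⋯ ∘ 𝓕^{t_k}_{Y_k}(0,z)`.  Then there are open
neighborhoods `U₀` of `(0,0)` and `U₁` of `0` and `C ≥ 1` such that `G` maps `U₀`
bijectively onto `U₁` and `C⁻¹|p−q| ≤ |G(p)−G(q)| ≤ C|p−q|` on `U₀`. -/
theorem stmt_7 {k m : ℕ} (hk : 1 ≤ k) (hm : 1 ≤ m)
    (Y : Fin k → (EuclideanSpace ℝ (Fin k) × EuclideanSpace ℝ (Fin m)) →
      (EuclideanSpace ℝ (Fin k) × EuclideanSpace ℝ (Fin m)))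
    (L : NNReal) (hYlip : ∀ i, LipschitzWith L (Y i))
    (hform : ∀ i x, (Y i x).1 = EuclideanSpace.single i 1)
    (h0 : ∀ i, (Y i 0).2 = 0)
    (hcomm : ∀ᵐ x ∂(volume :
        Measure (EuclideanSpace ℝ (Fin k) × EuclideanSpace ℝ (Fin m))),
      ∀ i j : Fin k, fderiv ℝ (Y j) x (Y i x) - fderiv ℝ (Y i) x (Y j x) = 0)
    (F : Fin k → ℝ → (EuclideanSpace ℝ (Fin k) × EuclideanSpace ℝ (Fin m)) →
      (EuclideanSpace ℝ (Fin k) × EuclideanSpace ℝ (Fin m)))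
    (hF0 : ∀ i x, F i 0 x = x)
    (hF : ∀ i t x, HasDerivAt (fun s => F i s x) (Y i (F i t x)) t)
    (G : (EuclideanSpace ℝ (Fin k) × EuclideanSpace ℝ (Fin m)) →
      (EuclideanSpace ℝ (Fin k) × EuclideanSpace ℝ (Fin m)))
    (hG : ∀ t : EuclideanSpace ℝ (Fin k), ∀ z : EuclideanSpace ℝ (Fin m),
      G (t, z) = flowComp (fun i => F i (t i)) ((0 : EuclideanSpace ℝ (Fin k)), z)) :
    ∃ U₀ U₁ : Set (EuclideanSpace ℝ (Fin k) × EuclideanSpace ℝ (Fin m)),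
      IsOpen U₀ ∧ (0 : EuclideanSpace ℝ (Fin k) × EuclideanSpace ℝ (Fin m)) ∈ U₀ ∧
      IsOpen U₁ ∧ (0 : EuclideanSpace ℝ (Fin k) × EuclideanSpace ℝ (Fin m)) ∈ U₁ ∧
      ∃ C : ℝ, 1 ≤ C ∧ Set.BijOn G U₀ U₁ ∧
        ∀ p ∈ U₀, ∀ q ∈ U₀,
          C⁻¹ * ‖p - q‖ ≤ ‖G p - G q‖ ∧ ‖G p - G q‖ ≤ C * ‖p - q‖ := by
  classical
  have hL : (0:ℝ) ≤ ((L:ℝ)) := L.coe_nonneg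
  have hexp : ((L:ℝ)) + 1 ≤ Real.exp ((L:ℝ)) := Real.add_one_le_exp ((L:ℝ))
  have hexppos : (0:ℝ) < Real.exp ((L:ℝ)) := Real.exp_pos ((L:ℝ))
  have h2exp : Real.exp (2*((L:ℝ))) = Real.exp ((L:ℝ)) * Real.exp ((L:ℝ)) := by rw [two_mul, Real.exp_add]
  obtain ⟨c, hcdef⟩ : ∃ c : ℝ, c = (1 + ((L:ℝ))) * Real.exp (2*((L:ℝ))) := ⟨_, rfl⟩
  have hc1 : (1:ℝ) ≤ c := by rw [hcdef]; nlinarith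
  have hc0 : (0:ℝ) ≤ c := le_trans zero_le_one hc1
  have hck1 : (1:ℝ) ≤ c ^ k := one_le_pow₀ hc1
  have hck0 : (0:ℝ) ≤ c ^ k := pow_nonneg hc0 k
  -- coordinate bound
  have hcoord : ∀ (t : (EuclideanSpace ℝ (Fin k))) (i : Fin k), |t i| ≤ ‖t‖ := by
    intro t i
    have h := abs_real_inner_le_norm t (EuclideanSpace.single i (1:ℝ))
    simpa [EuclideanSpace.inner_single_right, EuclideanSpace.norm_single] using h
  have hsum : ∀ t : (EuclideanSpace ℝ (Fin k)), ∑ i, t i • EuclideanSpace.single i (1:ℝ) = t := by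
    intro t
    have h := (EuclideanSpace.basisFun (Fin k) ℝ).sum_repr t
    simpa [EuclideanSpace.basisFun_apply, EuclideanSpace.basisFun_repr] using h
  -- bounds on Y
  have hY0 : ∀ i, ‖Y i 0‖ = 1 := by
    intro i
    rw [Prod.norm_def, hform i 0, h0 i]
    simp [EuclideanSpace.norm_single]
  have hYb : ∀ i x, ‖Y i x‖ ≤ 1 + ((L:ℝ)) * ‖x‖ := by
    intro i x
    have h1 : ‖Y i x‖ ≤ ‖Y i 0‖ + ‖Y i x - Y i 0‖ := by
      have := norm_add_le (Y i 0) (Y i x - Y i 0)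
      simpa using this
    have h2 : ‖Y i x - Y i 0‖ ≤ ((L:ℝ)) * ‖x‖ := by
      have := (hYlip i).dist_le_mul x 0
      simpa [dist_eq_norm] using this
    rw [hY0 i] at h1
    linarith
  -- single flow facts
  have Fdist : ∀ (i : Fin k) (t : ℝ) (x y : (EuclideanSpace ℝ (Fin k)) × (EuclideanSpace ℝ (Fin m))),
      ‖F i t x - F i t y‖ ≤ ‖x - y‖ * Real.exp (((L:ℝ)) * |t|) := by
    intro i t x y
    have := flow_dist (hYlip i) (hF0 i) (hF i) t x y
    simpa [dist_eq_norm] using this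
  have Fself : ∀ (i : Fin k) (t : ℝ) (x : (EuclideanSpace ℝ (Fin k)) × (EuclideanSpace ℝ (Fin m))),
      ‖F i t x - x‖ ≤ ‖Y i x‖ * (|t| * Real.exp (((L:ℝ)) * |t|)) := by
    intro i t x
    have := flow_dist_self (hYlip i) (hF0 i) (hF i) t x
    simpa [dist_eq_norm] using this
  have Fadd : ∀ (i : Fin k) (a b : ℝ) (x : (EuclideanSpace ℝ (Fin k)) × (EuclideanSpace ℝ (Fin m))), F i (a + b) x = F i a (F i b x) :=
    fun i a b x => flow_add (hYlip i) (hF0 i) (hF i) a b x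
  have Fcancel : ∀ (i : Fin k) (t : ℝ) (x : (EuclideanSpace ℝ (Fin k)) × (EuclideanSpace ℝ (Fin m))), F i t (F i (-t) x) = x :=
    fun i t x => flow_cancel (hYlip i) (hF0 i) (hF i) t x
  -- restricted facts
  have hexp_le : ∀ t : ℝ, |t| ≤ 1 → Real.exp (((L:ℝ)) * |t|) ≤ Real.exp ((L:ℝ)) := by
    intro t ht
    apply Real.exp_le_exp.2
    nlinarith [abs_nonneg t]
  have hexpc : Real.exp ((L:ℝ)) ≤ c := by rw [hcdef]; nlinarith
  have hlipF : ∀ (i : Fin k) (t : ℝ), |t| ≤ 1 → ∀ x y : (EuclideanSpace ℝ (Fin k)) × (EuclideanSpace ℝ (Fin m)),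
      ‖F i t x - F i t y‖ ≤ c * ‖x - y‖ := by
    intro i t ht x y
    have h1 := Fdist i t x y
    have h2 : Real.exp (((L:ℝ)) * |t|) ≤ c := le_trans (hexp_le t ht) hexpc
    nlinarith [norm_nonneg (x - y), Real.exp_pos (((L:ℝ)) * |t|)]
  have hgrowF : ∀ (i : Fin k) (t : ℝ), |t| ≤ 1 → ∀ x : (EuclideanSpace ℝ (Fin k)) × (EuclideanSpace ℝ (Fin m)),
      ‖F i t x‖ ≤ c * ‖x‖ + c := by
    intro i t ht x
    have h1 := Fself i t x
    have h2 : |t| * Real.exp (((L:ℝ)) * |t|) ≤ Real.exp ((L:ℝ)) := by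
      have := hexp_le t ht
      nlinarith [Real.exp_pos (((L:ℝ)) * |t|), abs_nonneg t]
    have h2' : ‖Y i x‖ * (|t| * Real.exp (((L:ℝ)) * |t|)) ≤ ‖Y i x‖ * Real.exp ((L:ℝ)) :=
      mul_le_mul_of_nonneg_left h2 (norm_nonneg _)
    have h3' : ‖Y i x‖ * Real.exp ((L:ℝ)) ≤ (1 + ((L:ℝ)) * ‖x‖) * Real.exp ((L:ℝ)) :=
      mul_le_mul_of_nonneg_right (hYb i x) (le_of_lt hexppos)
    have h4 : ‖F i t x‖ ≤ ‖x‖ + ‖F i t x - x‖ := by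
      have := norm_add_le x (F i t x - x)
      simpa using this
    have h5 : ‖F i t x‖ ≤ ‖x‖ + (1 + ((L:ℝ)) * ‖x‖) * Real.exp ((L:ℝ)) := by linarith
    have h6 : ‖x‖ + (1 + ((L:ℝ)) * ‖x‖) * Real.exp ((L:ℝ)) ≤ c * ‖x‖ + c := by
      have hu1 : (1:ℝ) ≤ Real.exp (L:ℝ) := by linarith
      have e0 : (0:ℝ) ≤ Real.exp (L:ℝ) - 1 := by linarith
      have p1 : (0:ℝ) ≤ Real.exp (L:ℝ) * (Real.exp (L:ℝ) - 1) := mul_nonneg hexppos.le e0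
      have p3 : (0:ℝ) ≤ ((L:ℝ)) * ‖x‖ * (Real.exp (L:ℝ) * (Real.exp (L:ℝ) - 1)) :=
        mul_nonneg (mul_nonneg hL (norm_nonneg x)) p1
      have p5 : (0:ℝ) ≤ ‖x‖ * ((Real.exp (L:ℝ) - 1) * (Real.exp (L:ℝ) + 1)) :=
        mul_nonneg (norm_nonneg x) (mul_nonneg e0 (by linarith))
      have p6 : (0:ℝ) ≤ ((L:ℝ)) * (Real.exp (L:ℝ) * Real.exp (L:ℝ)) :=
        mul_nonneg hL (mul_nonneg hexppos.le hexppos.le)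
      rw [hcdef, h2exp]
      nlinarith [p1, p3, p5, p6]
    linarith
  obtain ⟨c4, hc4def⟩ : ∃ c4 : ℝ, c4 = (1 + ((L:ℝ)) * c) * Real.exp (2*((L:ℝ))) := ⟨_, rfl⟩
  have hc40 : (0:ℝ) ≤ c4 := by
    rw [hc4def]; nlinarith [Real.exp_pos (2*((L:ℝ))), mul_nonneg hL hc0]
  have hcloseF : ∀ (i : Fin k) (t s : ℝ), |t| ≤ 1 → |s| ≤ 1 → ∀ x : (EuclideanSpace ℝ (Fin k)) × (EuclideanSpace ℝ (Fin m)),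
      ‖F i t x - F i s x‖ ≤ c4 * |t - s| * (1 + ‖x‖) := by
    intro i t s ht hs x
    have h1 : F i t x = F i (t - s) (F i s x) := by
      have := Fadd i (t - s) s x
      rw [sub_add_cancel] at this
      exact this
    have h2 := Fself i (t - s) (F i s x)
    have h3 : Real.exp (((L:ℝ)) * |t - s|) ≤ Real.exp (2*((L:ℝ))) := by
      apply Real.exp_le_exp.2
      have hts2 : |t - s| ≤ 2 := by
        cases abs_cases t <;> cases abs_cases s <;> cases abs_cases (t - s) <;> linarith
      nlinarith [abs_nonneg (t - s)]
    have h4 : ‖Y i (F i s x)‖ ≤ 1 + ((L:ℝ)) * (c * ‖x‖ + c) := by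
      have ha := hYb i (F i s x)
      have hb := hgrowF i s hs x
      have hc' := mul_le_mul_of_nonneg_left hb hL
      linarith
    have e1 : |t - s| * Real.exp (((L:ℝ)) * |t - s|) ≤ |t - s| * Real.exp (2*((L:ℝ))) :=
      mul_le_mul_of_nonneg_left h3 (abs_nonneg _)
    have e2 : ‖Y i (F i s x)‖ * (|t - s| * Real.exp (((L:ℝ)) * |t - s|))
        ≤ ‖Y i (F i s x)‖ * (|t - s| * Real.exp (2*((L:ℝ)))) :=
      mul_le_mul_of_nonneg_left e1 (norm_nonneg _)
    have e3 : ‖Y i (F i s x)‖ * (|t - s| * Real.exp (2*((L:ℝ))))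
        ≤ (1 + ((L:ℝ)) * (c * ‖x‖ + c)) * (|t - s| * Real.exp (2*((L:ℝ)))) :=
      mul_le_mul_of_nonneg_right h4 (by positivity)
    have e4 : (1 + ((L:ℝ)) * (c * ‖x‖ + c)) ≤ (1 + ((L:ℝ)) * c) * (1 + ‖x‖) := by
      nlinarith [mul_nonneg hL hc0, norm_nonneg x]
    have e5 : (1 + ((L:ℝ)) * (c * ‖x‖ + c)) * (|t - s| * Real.exp (2*((L:ℝ))))
        ≤ ((1 + ((L:ℝ)) * c) * (1 + ‖x‖)) * (|t - s| * Real.exp (2*((L:ℝ)))) :=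
      mul_le_mul_of_nonneg_right e4 (by positivity)
    have e6 : ((1 + ((L:ℝ)) * c) * (1 + ‖x‖)) * (|t - s| * Real.exp (2*((L:ℝ))))
        = c4 * |t - s| * (1 + ‖x‖) := by rw [hc4def]; ring
    rw [h1]
    linarith
  -- composed flow facts
  have hPhiLip : ∀ (t : (EuclideanSpace ℝ (Fin k))), ‖t‖ ≤ 1 → ∀ x y : (EuclideanSpace ℝ (Fin k)) × (EuclideanSpace ℝ (Fin m)),
      ‖flowComp (fun i => F i (t i)) x - flowComp (fun i => F i (t i)) y‖ ≤ c ^ k * ‖x - y‖ :=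
    fun t ht x y => flowComp_lip _ hc1
      (fun i x y => hlipF i (t i) (le_trans (hcoord t i) ht) x y) x y
  have hPsiLip : ∀ (t : (EuclideanSpace ℝ (Fin k))), ‖t‖ ≤ 1 → ∀ x y : (EuclideanSpace ℝ (Fin k)) × (EuclideanSpace ℝ (Fin m)),
      ‖flowComp (fun j => F (Fin.rev j) (-(t (Fin.rev j)))) x
        - flowComp (fun j => F (Fin.rev j) (-(t (Fin.rev j)))) y‖ ≤ c ^ k * ‖x - y‖ :=
    fun t ht x y => flowComp_lip _ hc1
      (fun j x y => hlipF (Fin.rev j) (-(t (Fin.rev j)))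
        (by rw [abs_neg]; exact le_trans (hcoord t _) ht) x y) x y
  have hPsiPhi : ∀ (t : (EuclideanSpace ℝ (Fin k))) (x : (EuclideanSpace ℝ (Fin k)) × (EuclideanSpace ℝ (Fin m))),
      flowComp (fun j => F (Fin.rev j) (-(t (Fin.rev j))))
        (flowComp (fun i => F i (t i)) x) = x := by
    intro t x
    exact flowComp_leftInv (fun i => F i (t i)) (fun i => F i (-(t i)))
      (fun i y => by simpa using Fcancel i (-(t i)) y) x
  have hPhiPsi : ∀ (t : (EuclideanSpace ℝ (Fin k))) (x : (EuclideanSpace ℝ (Fin k)) × (EuclideanSpace ℝ (Fin m))),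
      flowComp (fun i => F i (t i))
        (flowComp (fun j => F (Fin.rev j) (-(t (Fin.rev j)))) x) = x := by
    intro t x
    have h := flowComp_leftInv (fun j => F (Fin.rev j) (-(t (Fin.rev j))))
      (fun j => F (Fin.rev j) (t (Fin.rev j)))
      (fun j y => Fcancel (Fin.rev j) (t (Fin.rev j)) y) x
    have he : (fun j : Fin k => F (Fin.rev (Fin.rev j)) (t (Fin.rev (Fin.rev j))))
        = fun i => F i (t i) := by
      funext j
      rw [Fin.rev_rev]
    rw [he] at h
    exact h
  have hPhiLow : ∀ (t : (EuclideanSpace ℝ (Fin k))), ‖t‖ ≤ 1 → ∀ x y : (EuclideanSpace ℝ (Fin k)) × (EuclideanSpace ℝ (Fin m)),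
      ‖x - y‖ ≤ c ^ k * ‖flowComp (fun i => F i (t i)) x - flowComp (fun i => F i (t i)) y‖ := by
    intro t ht x y
    calc ‖x - y‖ = ‖flowComp (fun j => F (Fin.rev j) (-(t (Fin.rev j))))
            (flowComp (fun i => F i (t i)) x)
          - flowComp (fun j => F (Fin.rev j) (-(t (Fin.rev j))))
            (flowComp (fun i => F i (t i)) y)‖ := by rw [hPsiPhi, hPsiPhi]
      _ ≤ c ^ k * ‖flowComp (fun i => F i (t i)) x - flowComp (fun i => F i (t i)) y‖ :=
          hPsiLip t ht _ _
  obtain ⟨K, hKdef⟩ : ∃ K : ℝ, K = (k:ℝ) * c ^ k * c4 * ((k:ℝ) + 2) := ⟨_, rfl⟩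
  have hkc4 : (0:ℝ) ≤ (k:ℝ) * c ^ k * c4 :=
    mul_nonneg (mul_nonneg (Nat.cast_nonneg k) hck0) hc40
  have hK0 : (0:ℝ) ≤ K := by
    rw [hKdef]; exact mul_nonneg hkc4 (by positivity)
  have hTime : ∀ (t s : (EuclideanSpace ℝ (Fin k))) (x : (EuclideanSpace ℝ (Fin k)) × (EuclideanSpace ℝ (Fin m))), ‖t‖ ≤ 1 → ‖s‖ ≤ 1 → ‖x‖ ≤ 1 →
      ‖flowComp (fun i => F i (t i)) x - flowComp (fun i => F i (s i)) x‖ ≤ K * ‖t - s‖ := by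
    intro t s x ht hs hx
    have h1 : ‖flowComp (fun i => F i (t i)) x - flowComp (fun i => F i (s i)) x‖
        ≤ (k:ℝ) * c ^ k * (c4 * ‖t - s‖) * (1 + k + ‖x‖) := by
      apply flowComp_sub_le _ _ hc1 (mul_nonneg hc40 (norm_nonneg _))
        (fun i x y => hlipF i (t i) (le_trans (hcoord t i) ht) x y)
        (fun i x => hgrowF i (s i) (le_trans (hcoord s i) hs) x)
      intro i y
      have hco : |t i - s i| ≤ ‖t - s‖ := by
        have := hcoord (t - s) i
        simpa using this
      have h := hcloseF i (t i) (s i) (le_trans (hcoord t i) ht) (le_trans (hcoord s i) hs) y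
      have h2 : c4 * |t i - s i| * (1 + ‖y‖) ≤ c4 * ‖t - s‖ * (1 + ‖y‖) := by
        apply mul_le_mul_of_nonneg_right _ (by positivity)
        exact mul_le_mul_of_nonneg_left hco hc40
      calc ‖F i (t i) y - F i (s i) y‖ ≤ c4 * |t i - s i| * (1 + ‖y‖) := h
        _ ≤ c4 * ‖t - s‖ * (1 + ‖y‖) := h2
        _ = (c4 * ‖t - s‖) * (1 + ‖y‖) := by ring
    calc ‖flowComp (fun i => F i (t i)) x - flowComp (fun i => F i (s i)) x‖
        ≤ (k:ℝ) * c ^ k * (c4 * ‖t - s‖) * (1 + k + ‖x‖) := h1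
      _ ≤ (k:ℝ) * c ^ k * (c4 * ‖t - s‖) * ((k:ℝ) + 2) := by
          apply mul_le_mul_of_nonneg_left (by linarith)
          exact mul_nonneg (mul_nonneg (Nat.cast_nonneg k) hck0)
            (mul_nonneg hc40 (norm_nonneg _))
      _ = K * ‖t - s‖ := by rw [hKdef]; ring
  -- first components
  have hfstF : ∀ (i : Fin k) (s : ℝ) (x : (EuclideanSpace ℝ (Fin k)) × (EuclideanSpace ℝ (Fin m))),
      (F i s x).1 = x.1 + s • EuclideanSpace.single i 1 := by
    intro i s x
    have hfd : ∀ u : ℝ, HasDerivAt (fun u => (F i u x).1)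
        ((EuclideanSpace.single i 1 : (EuclideanSpace ℝ (Fin k)))) u := by
      intro u
      have h := (ContinuousLinearMap.fst ℝ (EuclideanSpace ℝ (Fin k)) (EuclideanSpace ℝ (Fin m))).hasFDerivAt.comp_hasDerivAt u (hF i u x)
      simpa [hform, Function.comp_def] using h
    have hφ : ∀ u : ℝ, HasDerivAt
        (fun u : ℝ => (F i u x).1 - u • (EuclideanSpace.single i 1 : (EuclideanSpace ℝ (Fin k)))) 0 u := by
      intro u
      have h2 : HasDerivAt (fun u : ℝ => u • (EuclideanSpace.single i 1 : (EuclideanSpace ℝ (Fin k))))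
          (EuclideanSpace.single i 1 : (EuclideanSpace ℝ (Fin k))) u := by
        simpa using (hasDerivAt_id u).smul_const (EuclideanSpace.single i 1 : (EuclideanSpace ℝ (Fin k)))
      simpa [Pi.sub_def] using (hfd u).sub h2
    have hconst := is_const_of_deriv_eq_zero (𝕜 := ℝ)
      (f := fun u : ℝ => (F i u x).1 - u • (EuclideanSpace.single i 1 : (EuclideanSpace ℝ (Fin k))))
      (fun u => (hφ u).differentiableAt) (fun u => (hφ u).deriv) s 0
    simp only [hF0, zero_smul, sub_zero] at hconst
    exact sub_eq_iff_eq_add.mp hconst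
  have hPhiFst : ∀ (t : (EuclideanSpace ℝ (Fin k))) (x : (EuclideanSpace ℝ (Fin k)) × (EuclideanSpace ℝ (Fin m))), (flowComp (fun i => F i (t i)) x).1 = x.1 + t := by
    intro t x
    have h := flowComp_fst (fun i => F i (t i))
      (fun i => t i • EuclideanSpace.single i 1) (fun i x => hfstF i (t i) x) x
    rw [h, hsum t]
  have hPsiFst : ∀ (t : (EuclideanSpace ℝ (Fin k))) (x : (EuclideanSpace ℝ (Fin k)) × (EuclideanSpace ℝ (Fin m))),
      (flowComp (fun j => F (Fin.rev j) (-(t (Fin.rev j)))) x).1 = x.1 - t := by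
    intro t x
    have h := flowComp_fst (fun j => F (Fin.rev j) (-(t (Fin.rev j))))
      (fun j => (-(t (Fin.rev j))) • EuclideanSpace.single (Fin.rev j) 1)
      (fun j x => hfstF _ _ x) x
    rw [h]
    have hre : ∑ j : Fin k, (-(t (Fin.rev j))) • EuclideanSpace.single (Fin.rev j) (1:ℝ)
        = ∑ i : Fin k, (-(t i)) • EuclideanSpace.single i (1:ℝ) :=
      Fintype.sum_bijective Fin.rev (Fin.rev_involutive.bijective) _ _ (fun j => rfl)
    rw [hre]
    have hns : ∑ i : Fin k, (-(t i)) • EuclideanSpace.single i (1:ℝ) = -t := by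
      calc ∑ i : Fin k, (-(t i)) • EuclideanSpace.single i (1:ℝ)
          = -∑ i : Fin k, t i • EuclideanSpace.single i (1:ℝ) := by
            rw [← Finset.sum_neg_distrib]
            simp [neg_smul]
        _ = -t := by rw [hsum]
    rw [hns, sub_eq_add_neg]
  -- G basics
  have hGdef : ∀ p : (EuclideanSpace ℝ (Fin k)) × (EuclideanSpace ℝ (Fin m)), G p = flowComp (fun i => F i (p.1 i)) ((0 : (EuclideanSpace ℝ (Fin k))), p.2) :=
    fun p => hG p.1 p.2
  have hGfst : ∀ p : (EuclideanSpace ℝ (Fin k)) × (EuclideanSpace ℝ (Fin m)), (G p).1 = p.1 := by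
    intro p
    rw [hGdef p, hPhiFst]
    simp
  have hG00 : G 0 = 0 := by
    have h := hG 0 0
    have h2 : flowComp (fun i => F i ((0:(EuclideanSpace ℝ (Fin k))) i)) ((0:(EuclideanSpace ℝ (Fin k))), (0:(EuclideanSpace ℝ (Fin m)))) = ((0:(EuclideanSpace ℝ (Fin k))), (0:(EuclideanSpace ℝ (Fin m)))) :=
      flowComp_id_of _ (fun i x => by
        have : (0:(EuclideanSpace ℝ (Fin k))) i = (0:ℝ) := rfl
        rw [this]; exact hF0 i x) _
    rw [h2] at h
    exact h
  obtain ⟨C, hCdef⟩ : ∃ C : ℝ, C = c ^ k * (1 + K) := ⟨_, rfl⟩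
  have hC1 : (1:ℝ) ≤ C := by
    rw [hCdef]; nlinarith [mul_nonneg hck0 hK0]
  have hC0 : (0:ℝ) < C := lt_of_lt_of_le zero_lt_one hC1
  have hmem : ∀ p : (EuclideanSpace ℝ (Fin k)) × (EuclideanSpace ℝ (Fin m)), ‖p‖ < 1 → ‖p.1‖ ≤ 1 ∧ ‖((0:(EuclideanSpace ℝ (Fin k))), p.2)‖ ≤ 1 := by
    intro p hp
    constructor
    · exact le_of_lt (lt_of_le_of_lt (norm_fst_le p) hp)
    · have h : ‖((0:(EuclideanSpace ℝ (Fin k))), p.2)‖ = ‖p.2‖ := by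
        rw [Prod.norm_def]
        simp
      rw [h]
      exact le_of_lt (lt_of_le_of_lt (norm_snd_le p) hp)
  have hzw_norm : ∀ z w : (EuclideanSpace ℝ (Fin m)), ‖((0:(EuclideanSpace ℝ (Fin k))), z) - ((0:(EuclideanSpace ℝ (Fin k))), w)‖ = ‖z - w‖ := by
    intro z w
    rw [show ((0:(EuclideanSpace ℝ (Fin k))), z) - ((0:(EuclideanSpace ℝ (Fin k))), w) = ((0:(EuclideanSpace ℝ (Fin k))), z - w) by simp [Prod.ext_iff]]
    rw [Prod.norm_def]
    simp
  -- upper bound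
  have upper : ∀ p q : (EuclideanSpace ℝ (Fin k)) × (EuclideanSpace ℝ (Fin m)), ‖p‖ < 1 → ‖q‖ < 1 → ‖G p - G q‖ ≤ C * ‖p - q‖ := by
    intro p q hp hq
    obtain ⟨hp1, hp2⟩ := hmem p hp
    obtain ⟨hq1, hq2⟩ := hmem q hq
    have h1 : ‖G p - G q‖ ≤ ‖flowComp (fun i => F i (p.1 i)) ((0:(EuclideanSpace ℝ (Fin k))), p.2)
          - flowComp (fun i => F i (p.1 i)) ((0:(EuclideanSpace ℝ (Fin k))), q.2)‖
        + ‖flowComp (fun i => F i (p.1 i)) ((0:(EuclideanSpace ℝ (Fin k))), q.2)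
          - flowComp (fun i => F i (q.1 i)) ((0:(EuclideanSpace ℝ (Fin k))), q.2)‖ := by
      rw [hGdef p, hGdef q]
      exact norm_sub_le_norm_sub_add_norm_sub _ _ _
    have h2 : ‖flowComp (fun i => F i (p.1 i)) ((0:(EuclideanSpace ℝ (Fin k))), p.2)
        - flowComp (fun i => F i (p.1 i)) ((0:(EuclideanSpace ℝ (Fin k))), q.2)‖ ≤ c ^ k * ‖p.2 - q.2‖ := by
      have := hPhiLip p.1 hp1 ((0:(EuclideanSpace ℝ (Fin k))), p.2) ((0:(EuclideanSpace ℝ (Fin k))), q.2)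
      rwa [hzw_norm] at this
    have h3 : ‖flowComp (fun i => F i (p.1 i)) ((0:(EuclideanSpace ℝ (Fin k))), q.2)
        - flowComp (fun i => F i (q.1 i)) ((0:(EuclideanSpace ℝ (Fin k))), q.2)‖ ≤ K * ‖p.1 - q.1‖ :=
      hTime p.1 q.1 ((0:(EuclideanSpace ℝ (Fin k))), q.2) hp1 hq1 hq2
    have h4 : ‖p.2 - q.2‖ ≤ ‖p - q‖ := norm_snd_le (p - q)
    have h5 : ‖p.1 - q.1‖ ≤ ‖p - q‖ := norm_fst_le (p - q)
    have h6 : c ^ k * ‖p.2 - q.2‖ + K * ‖p.1 - q.1‖ ≤ (c ^ k + K) * ‖p - q‖ := by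
      have e1 := mul_le_mul_of_nonneg_left h4 hck0
      have e2 := mul_le_mul_of_nonneg_left h5 hK0
      have : (c ^ k + K) * ‖p - q‖ = c ^ k * ‖p - q‖ + K * ‖p - q‖ := by ring
      linarith
    have h7 : (c ^ k + K) * ‖p - q‖ ≤ C * ‖p - q‖ := by
      apply mul_le_mul_of_nonneg_right _ (norm_nonneg _)
      rw [hCdef]
      nlinarith [mul_nonneg (sub_nonneg.2 hck1) hK0]
    linarith
  -- lower bound
  have lower : ∀ p q : (EuclideanSpace ℝ (Fin k)) × (EuclideanSpace ℝ (Fin m)), ‖p‖ < 1 → ‖q‖ < 1 → ‖p - q‖ ≤ C * ‖G p - G q‖ := by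
    intro p q hp hq
    obtain ⟨hp1, hp2⟩ := hmem p hp
    obtain ⟨hq1, hq2⟩ := hmem q hq
    have hD : ‖p.1 - q.1‖ ≤ ‖G p - G q‖ := by
      have h := norm_fst_le (G p - G q)
      have he : (G p - G q).1 = p.1 - q.1 := by
        rw [Prod.fst_sub, hGfst, hGfst]
      rwa [he] at h
    have hzw : ‖p.2 - q.2‖ ≤ c ^ k * (‖G p - G q‖ + K * ‖p.1 - q.1‖) := by
      have h1 : ‖p.2 - q.2‖ ≤ c ^ k * ‖flowComp (fun i => F i (p.1 i)) ((0:(EuclideanSpace ℝ (Fin k))), p.2)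
          - flowComp (fun i => F i (p.1 i)) ((0:(EuclideanSpace ℝ (Fin k))), q.2)‖ := by
        have := hPhiLow p.1 hp1 ((0:(EuclideanSpace ℝ (Fin k))), p.2) ((0:(EuclideanSpace ℝ (Fin k))), q.2)
        rwa [hzw_norm] at this
      have h2 : ‖flowComp (fun i => F i (p.1 i)) ((0:(EuclideanSpace ℝ (Fin k))), p.2)
            - flowComp (fun i => F i (p.1 i)) ((0:(EuclideanSpace ℝ (Fin k))), q.2)‖
          ≤ ‖flowComp (fun i => F i (p.1 i)) ((0:(EuclideanSpace ℝ (Fin k))), p.2)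
            - flowComp (fun i => F i (q.1 i)) ((0:(EuclideanSpace ℝ (Fin k))), q.2)‖
          + ‖flowComp (fun i => F i (q.1 i)) ((0:(EuclideanSpace ℝ (Fin k))), q.2)
            - flowComp (fun i => F i (p.1 i)) ((0:(EuclideanSpace ℝ (Fin k))), q.2)‖ :=
        norm_sub_le_norm_sub_add_norm_sub _ _ _
      have h3 : ‖flowComp (fun i => F i (q.1 i)) ((0:(EuclideanSpace ℝ (Fin k))), q.2)
          - flowComp (fun i => F i (p.1 i)) ((0:(EuclideanSpace ℝ (Fin k))), q.2)‖ ≤ K * ‖p.1 - q.1‖ := by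
        have := hTime q.1 p.1 ((0:(EuclideanSpace ℝ (Fin k))), q.2) hq1 hp1 hq2
        rwa [norm_sub_rev q.1 p.1] at this
      have h4 : G p - G q = flowComp (fun i => F i (p.1 i)) ((0:(EuclideanSpace ℝ (Fin k))), p.2)
          - flowComp (fun i => F i (q.1 i)) ((0:(EuclideanSpace ℝ (Fin k))), q.2) := by
        rw [hGdef p, hGdef q]
      rw [← h4] at h2
      have hchain : ‖flowComp (fun i => F i (p.1 i)) ((0:(EuclideanSpace ℝ (Fin k))), p.2)
          - flowComp (fun i => F i (p.1 i)) ((0:(EuclideanSpace ℝ (Fin k))), q.2)‖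
          ≤ ‖G p - G q‖ + K * ‖p.1 - q.1‖ := by linarith
      have := mul_le_mul_of_nonneg_left hchain hck0
      linarith
    have hD2 : ‖p.2 - q.2‖ ≤ C * ‖G p - G q‖ := by
      have h1 : K * ‖p.1 - q.1‖ ≤ K * ‖G p - G q‖ := mul_le_mul_of_nonneg_left hD hK0
      have h2 : c ^ k * (‖G p - G q‖ + K * ‖p.1 - q.1‖)
          ≤ c ^ k * (‖G p - G q‖ + K * ‖G p - G q‖) :=
        mul_le_mul_of_nonneg_left (by linarith) hck0
      have h3 : c ^ k * (‖G p - G q‖ + K * ‖G p - G q‖) = C * ‖G p - G q‖ := by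
        rw [hCdef]; ring
      linarith
    have hD1 : ‖p.1 - q.1‖ ≤ C * ‖G p - G q‖ := by
      have := mul_nonneg (sub_nonneg.2 hC1) (norm_nonneg (G p - G q))
      nlinarith
    rw [Prod.norm_def]
    rw [show (p - q).1 = p.1 - q.1 from Prod.fst_sub p q,
        show (p - q).2 = p.2 - q.2 from Prod.snd_sub p q]
    exact max_le hD1 hD2
  -- injectivity
  have hinj : Set.InjOn G (Metric.ball 0 1) := by
    intro p hp q hq he
    rw [Metric.mem_ball, dist_zero_right] at hp hq
    have h := lower p q hp hq
    rw [he, sub_self, norm_zero, mul_zero] at h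
    have := norm_nonneg (p - q)
    have hpq : ‖p - q‖ = 0 := le_antisymm h this
    exact sub_eq_zero.mp (norm_eq_zero.mp hpq)
  -- openness of the image
  have hopen : IsOpen (G '' Metric.ball 0 1) := by
    rw [Metric.isOpen_iff]
    rintro y ⟨p₀, hp₀, rfl⟩
    rw [Metric.mem_ball, dist_zero_right] at hp₀
    obtain ⟨hp01, hp02⟩ := hmem p₀ hp₀
    set r : ℝ := 1 - ‖p₀‖ with hrdef
    have hr : 0 < r := by rw [hrdef]; linarith
    refine ⟨r / (2 * C), by positivity, ?_⟩
    intro y hy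
    rw [Metric.mem_ball, dist_eq_norm] at hy
    obtain ⟨t, htdef⟩ : ∃ t : EuclideanSpace ℝ (Fin k), t = y.1 := ⟨_, rfl⟩
    obtain ⟨x, hxdef⟩ : ∃ x : (EuclideanSpace ℝ (Fin k)) × (EuclideanSpace ℝ (Fin m)),
        x = flowComp (fun j => F (Fin.rev j) (-(t (Fin.rev j)))) y := ⟨_, rfl⟩
    have hx1 : x.1 = 0 := by
      rw [hxdef, hPsiFst, htdef]
      simp
    have hx : ((0:(EuclideanSpace ℝ (Fin k))), x.2) = x := by
      rw [← hx1]
    have hGq : G (t, x.2) = y := by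
      rw [hG t x.2, show (fun i => F i ((t, x.2).1 i)) = fun i => F i (t i) from rfl]
      rw [show ((0:(EuclideanSpace ℝ (Fin k))) , (t, x.2).2) = ((0:(EuclideanSpace ℝ (Fin k))), x.2) from rfl, hx, hxdef]
      exact hPhiPsi t y
    have hδ2 : r / (2 * C) ≤ r / 2 := by
      apply div_le_div_of_nonneg_left hr.le (by norm_num)
      linarith
    have hyfst : ‖t - p₀.1‖ < r / (2 * C) := by
      have h := norm_fst_le (y - G p₀)
      have he : (y - G p₀).1 = t - p₀.1 := by
        rw [Prod.fst_sub, hGfst, htdef]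
      rw [he] at h
      exact lt_of_le_of_lt h hy
    have hT : ‖t‖ < 1 := by
      have h1 : ‖t‖ ≤ ‖p₀.1‖ + ‖t - p₀.1‖ := by
        have := norm_add_le p₀.1 (t - p₀.1)
        simpa using this
      have h2 : ‖p₀.1‖ ≤ ‖p₀‖ := norm_fst_le p₀
      have h3 : ‖t - p₀.1‖ < r / 2 := lt_of_lt_of_le hyfst hδ2
      have : r / 2 < r := by linarith
      rw [hrdef] at *
      linarith
    have hT1 : ‖t‖ ≤ 1 := hT.le
    have hx2 : ‖x.2 - p₀.2‖ < r / 2 := by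
      have h1 : ‖x.2 - p₀.2‖ ≤ c ^ k * ‖flowComp (fun i => F i (t i)) ((0:(EuclideanSpace ℝ (Fin k))), x.2)
          - flowComp (fun i => F i (t i)) ((0:(EuclideanSpace ℝ (Fin k))), p₀.2)‖ := by
        have := hPhiLow t hT1 ((0:(EuclideanSpace ℝ (Fin k))), x.2) ((0:(EuclideanSpace ℝ (Fin k))), p₀.2)
        rwa [hzw_norm] at this
      have h2 : flowComp (fun i => F i (t i)) ((0:(EuclideanSpace ℝ (Fin k))), x.2) = y := by
        rw [hx, hxdef]
        exact hPhiPsi t y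
      have h3 : ‖y - flowComp (fun i => F i (t i)) ((0:(EuclideanSpace ℝ (Fin k))), p₀.2)‖
          ≤ ‖y - G p₀‖ + ‖G p₀ - flowComp (fun i => F i (t i)) ((0:(EuclideanSpace ℝ (Fin k))), p₀.2)‖ :=
        norm_sub_le_norm_sub_add_norm_sub _ _ _
      have h4 : ‖G p₀ - flowComp (fun i => F i (t i)) ((0:(EuclideanSpace ℝ (Fin k))), p₀.2)‖ ≤ K * ‖p₀.1 - t‖ := by
        rw [hGdef p₀]
        exact hTime p₀.1 t ((0:(EuclideanSpace ℝ (Fin k))), p₀.2) hp01 hT1 hp02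
      have h5 : ‖p₀.1 - t‖ < r / (2 * C) := by
        rwa [norm_sub_rev] at hyfst
      have h6 : ‖x.2 - p₀.2‖ ≤ c ^ k * (‖y - G p₀‖ + K * ‖p₀.1 - t‖) := by
        rw [h2] at h1
        have hchain : ‖y - flowComp (fun i => F i (t i)) ((0:(EuclideanSpace ℝ (Fin k))), p₀.2)‖
            ≤ ‖y - G p₀‖ + K * ‖p₀.1 - t‖ := by linarith
        have := mul_le_mul_of_nonneg_left hchain hck0
        linarith
      have h7 : c ^ k * (‖y - G p₀‖ + K * ‖p₀.1 - t‖) < c ^ k * (1 + K) * (r / (2 * C)) := by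
        have ha : ‖y - G p₀‖ + K * ‖p₀.1 - t‖ < (1 + K) * (r / (2 * C)) := by
          have hb : K * ‖p₀.1 - t‖ ≤ K * (r / (2 * C)) :=
            mul_le_mul_of_nonneg_left h5.le hK0
          have he : (1 + K) * (r / (2 * C)) = r / (2 * C) + K * (r / (2 * C)) := by ring
          linarith
        have hc' : (0:ℝ) < c ^ k := lt_of_lt_of_le zero_lt_one hck1
        calc c ^ k * (‖y - G p₀‖ + K * ‖p₀.1 - t‖)
            < c ^ k * ((1 + K) * (r / (2 * C))) := by
              exact (mul_lt_mul_iff_right₀ hc').2 ha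
          _ = c ^ k * (1 + K) * (r / (2 * C)) := by ring
      have h8 : c ^ k * (1 + K) * (r / (2 * C)) = r / 2 := by
        rw [← hCdef]
        field_simp
      linarith
    have hX2 : ‖x.2‖ < 1 := by
      have h1 : ‖x.2‖ ≤ ‖p₀.2‖ + ‖x.2 - p₀.2‖ := by
        have := norm_add_le p₀.2 (x.2 - p₀.2)
        simpa using this
      have h2 : ‖p₀.2‖ ≤ ‖p₀‖ := norm_snd_le p₀
      rw [hrdef] at hx2
      linarith
    refine ⟨(t, x.2), ?_, hGq⟩
    rw [Metric.mem_ball, dist_zero_right, Prod.norm_def]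
    exact max_lt hT hX2
  -- assemble
  refine ⟨Metric.ball 0 1, G '' Metric.ball 0 1, Metric.isOpen_ball, by simp, hopen, ?_, C, hC1,
    hinj.bijOn_image, ?_⟩
  · exact ⟨0, by simp, hG00⟩
  · intro p hp q hq
    rw [Metric.mem_ball, dist_zero_right] at hp hq
    constructor
    · rw [inv_mul_le_iff₀ hC0]
      exact lower p q hp hq
    · exact upper p q hp hq
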